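/- Let p ≥ 1 and let C be a real symmetric 2p×2p matrix whose characteristic polynomial equals ∏_{i=1}^{p} (X − ν_i)² for some real numbers ν₁ ≥ ν₂ ≥ … ≥ ν_p (i.e. every eigenvalue of C has even multiplicity, the ordered spectrum being the doubled list (ν₁, ν₁, …, ν_p, ν_p)). Then there exists a hermitian structure J on ℝ^{2p} (a real 2p×2p matrix with JᵀJ = I and J² = −I) such that JC = CJ. -/

import Mathlib

open Matrix Kronecker

section Aux

open Polynomial

private lemma my_charpoly_diagonal {n : Type*} [DecidableEq n] [Fintype n] {R : Type*} [CommRing R]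
    (d : n → R) : (Matrix.diagonal d).charpoly = ∏ i, (X - C (d i)) := by
  unfold Matrix.charpoly
  have h : charmatrix (diagonal d) = diagonal (fun i => X - C (d i)) := by
    ext i j
    by_cases h : i = j
    · subst h; simp
    · simp [charmatrix_apply_ne _ _ _ h, Matrix.diagonal_apply_ne _ h]
  rw [h, det_diagonal]

private lemma my_charpoly_conj {n : Type*} [DecidableEq n] [Fintype n] {R : Type*} [CommRing R]
    (U A V : Matrix n n R) (hUV : U * V = 1) :
    (U * A * V).charpoly = A.charpoly := by
  unfold Matrix.charpoly
  have hmap : ∀ M N : Matrix n n R, (M * N).map (C : R →+* R[X]) = M.map C * N.map C := by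
    intro M N; exact Matrix.map_mul
  have key : charmatrix (U * A * V) = U.map C * charmatrix A * V.map C := by
    rw [charmatrix, charmatrix, Matrix.mul_sub, Matrix.sub_mul]
    congr 1
    · have comm := (Matrix.scalar_commute (n := n) (X : R[X]) (fun r => Commute.all _ _) (U.map C)).eq
      rw [← comm, mul_assoc, ← hmap, hUV]
      simp
    · simp only [RingHom.mapMatrix_apply]
      rw [← hmap, ← hmap, mul_assoc]
  have hdet : (U.map C).det * (V.map C).det = 1 := by
    rw [← det_mul, ← hmap, hUV]; simp
  rw [key, det_mul, det_mul]
  linear_combination A.charmatrix.det * hdet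

private lemma my_roots_prod {n : ℕ} (f : Fin n → ℝ) :
    (∏ k, (X - C (f k))).roots = Multiset.map f Finset.univ.val := by
  have h : ∏ k, (X - C (f k)) = ((Multiset.map f Finset.univ.val).map (fun a => X - C a)).prod := by
    rw [Multiset.map_map]; rfl
  rw [h, Polynomial.roots_multiset_prod_X_sub_C]

end Aux

set_option maxRecDepth 8000 in
theorem doubled_spectrum_implies_hermitian_commuting_structure
    (p : ℕ) (hp : 1 ≤ p)
    (C : Matrix (Fin (2 * p)) (Fin (2 * p)) ℝ) (hC : C.IsSymm)
    (ν : Fin p → ℝ) (hν : Antitone ν)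
    (hspec : C.charpoly = ∏ i : Fin p, (Polynomial.X - Polynomial.C (ν i)) ^ 2) :
    ∃ J : Matrix (Fin (2 * p)) (Fin (2 * p)) ℝ,
      Jᵀ * J = 1 ∧ J * J = -1 ∧ J * C = C * J := by
  classical
  have hC' : C.IsHermitian := by
    rwa [Matrix.IsHermitian, Matrix.conjTranspose_eq_transpose_of_trivial]
  set eig : Fin (2 * p) → ℝ := hC'.eigenvalues with heig
  set U : Matrix (Fin (2 * p)) (Fin (2 * p)) ℝ := ((hC'.eigenvectorUnitary : Matrix.unitaryGroup (Fin (2 * p)) ℝ) : Matrix (Fin (2 * p)) (Fin (2 * p)) ℝ) with hUdef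
  have hstar : star U = Uᵀ := by
    rw [Matrix.star_eq_conjTranspose, Matrix.conjTranspose_eq_transpose_of_trivial]
  have hUUt : U * Uᵀ = 1 := by
    rw [← hstar]; exact (Matrix.mem_unitaryGroup_iff).mp hC'.eigenvectorUnitary.2
  have hUtU : Uᵀ * U = 1 := by
    rw [← hstar]; exact (Matrix.mem_unitaryGroup_iff').mp hC'.eigenvectorUnitary.2
  have hspecC : C = U * Matrix.diagonal eig * Uᵀ := by
    have h := hC'.spectral_theorem
    rwa [Unitary.conjStarAlgAut_apply, hstar] at h
  -- characteristic polynomial via eigenvalues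
  have hcp : C.charpoly = ∏ k, (Polynomial.X - Polynomial.C (eig k)) := by
    rw [hspecC, my_charpoly_conj U _ Uᵀ hUUt, my_charpoly_diagonal]
  -- the pairing equivalence and the target monotone tuple
  set e : Fin p × Fin 2 ≃ Fin (2 * p) := finProdFinEquiv.trans (finCongr (Nat.mul_comm p 2)) with hedef
  set μ : Fin p → ℝ := fun i => ν i.rev with hμdef
  have hμ : Monotone μ := fun a b hab => hν (Fin.rev_le_rev.mpr hab)
  set g : Fin (2 * p) → ℝ := fun k => μ (e.symm k).1 with hgdef
  have hesymm : ∀ k : Fin (2 * p), ((e.symm k).1 : ℕ) = (k : ℕ) / 2 := by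
    intro k; rfl
  have hg : Monotone g := by
    intro a b hab
    apply hμ
    rw [Fin.le_def, hesymm, hesymm]
    exact Nat.div_le_div_right hab
  -- products agree
  have hprod : ∏ k, (Polynomial.X - Polynomial.C (g k))
      = ∏ i : Fin p, (Polynomial.X - Polynomial.C (ν i)) ^ 2 := by
    have h1 : ∀ x : Fin p × Fin 2, g (e x) = μ x.1 := by
      intro x
      show μ (e.symm (e x)).1 = μ x.1
      rw [Equiv.symm_apply_apply]
    rw [← Equiv.prod_comp e (fun k => Polynomial.X - Polynomial.C (g k))]
    rw [Finset.prod_congr rfl (fun x _ => by rw [h1] :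
      ∀ x ∈ Finset.univ, Polynomial.X - Polynomial.C (g (e x)) = Polynomial.X - Polynomial.C (μ x.1))]
    rw [Fintype.prod_prod_type]
    simp only [Finset.prod_const, Finset.card_univ, Fintype.card_fin]
    have h2 : ∀ i : Fin p, (Polynomial.X - Polynomial.C (μ i)) ^ 2
        = (fun j => (Polynomial.X - Polynomial.C (ν j)) ^ 2) i.rev := by
      intro i; rw [hμdef]
    rw [Finset.prod_congr rfl (fun i _ => h2 i)]
    exact Equiv.prod_comp Fin.revPerm (fun j => (Polynomial.X - Polynomial.C (ν j)) ^ 2)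
  -- multisets of eigenvalues agree
  have hPeq : ∏ k, (Polynomial.X - Polynomial.C (eig k))
      = ∏ k, (Polynomial.X - Polynomial.C (g k)) := by
    rw [← hcp, hspec, hprod]
  have hms : Multiset.map eig Finset.univ.val = Multiset.map g Finset.univ.val := by
    have h := congrArg Polynomial.roots hPeq
    rwa [my_roots_prod, my_roots_prod] at h
  have hperm : List.Perm (List.ofFn eig) (List.ofFn g) := by
    rw [Fin.univ_val_map, Fin.univ_val_map] at hms
    exact Multiset.coe_eq_coe.mp hms
  -- sort the eigenvalues
  set τ : Equiv.Perm (Fin (2 * p)) := Tuple.sort eig with hτdef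
  have hsorted : eig ∘ τ = g := by
    apply List.ofFn_injective
    have hs1 : List.Pairwise (· ≤ ·) (List.ofFn (eig ∘ ⇑τ)) := (Tuple.monotone_sort eig).sortedLE_ofFn.pairwise
    have hs2 : List.Pairwise (· ≤ ·) (List.ofFn g) := hg.sortedLE_ofFn.pairwise
    exact List.Perm.eq_of_pairwise' hs1 hs2 ((τ.ofFn_comp_perm eig).trans hperm)
  -- the orthogonal matrix diagonalizing C with diagonal g
  set W : Matrix (Fin (2 * p)) (Fin (2 * p)) ℝ := U.submatrix id ⇑τ with hWdef
  have hWt : Wᵀ = Uᵀ.submatrix ⇑τ id := by rw [hWdef, Matrix.transpose_submatrix]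
  have hWtW : Wᵀ * W = 1 := by
    rw [hWt, hWdef, ← Matrix.submatrix_mul Uᵀ U ⇑τ id ⇑τ Function.bijective_id, hUtU,
      Matrix.submatrix_one_equiv τ]
  have hWWt : W * Wᵀ = 1 := mul_eq_one_comm.mp hWtW
  have hCW : C = W * Matrix.diagonal g * Wᵀ := by
    rw [hWdef, hWt]
    have hd : Matrix.diagonal g = (Matrix.diagonal eig).submatrix ⇑τ ⇑τ := by
      rw [Matrix.submatrix_diagonal eig ⇑τ τ.injective, hsorted]
    rw [hd, Matrix.submatrix_mul_equiv, Matrix.submatrix_mul_equiv, Matrix.submatrix_id_id, hspecC]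
  -- the standard 2x2 rotation
  set S : Matrix (Fin 2) (Fin 2) ℝ := !![0, 1; -1, 0] with hSdef
  have hST : Sᵀ = !![0, -1; 1, 0] := by
    rw [hSdef]
    ext i j
    fin_cases i <;> fin_cases j <;> rfl
  have hS1 : Sᵀ * S = 1 := by
    rw [hST, hSdef, Matrix.mul_fin_two, Matrix.one_fin_two]
    norm_num
  have hS2 : S * S = -1 := by
    rw [hSdef, Matrix.mul_fin_two, Matrix.one_fin_two]
    ext i j
    fin_cases i <;> fin_cases j <;> norm_num
  -- the hermitian structure on the pairs
  set K : Matrix (Fin (2 * p)) (Fin (2 * p)) ℝ :=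
    ((1 : Matrix (Fin p) (Fin p) ℝ) ⊗ₖ S).submatrix ⇑e.symm ⇑e.symm with hKdef
  have hKt : Kᵀ = ((1 : Matrix (Fin p) (Fin p) ℝ) ⊗ₖ Sᵀ).submatrix ⇑e.symm ⇑e.symm := by
    rw [hKdef, Matrix.transpose_submatrix]
    congr 1
    rw [← Matrix.kroneckerMap_transpose, Matrix.transpose_one]
  have hKtK : Kᵀ * K = 1 := by
    rw [hKt, hKdef, Matrix.submatrix_mul_equiv, ← Matrix.mul_kronecker_mul, hS1, one_mul,
      Matrix.one_kronecker_one, Matrix.submatrix_one_equiv e.symm]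
  have hKK : K * K = -1 := by
    rw [hKdef, Matrix.submatrix_mul_equiv, ← Matrix.mul_kronecker_mul, hS2, one_mul]
    have hneg : (1 : Matrix (Fin p) (Fin p) ℝ) ⊗ₖ (-1 : Matrix (Fin 2) (Fin 2) ℝ)
        = -((1 : Matrix (Fin p) (Fin p) ℝ) ⊗ₖ (1 : Matrix (Fin 2) (Fin 2) ℝ)) := by
      ext x y
      simp only [Matrix.kroneckerMap_apply, Matrix.neg_apply, Matrix.one_apply, mul_neg, neg_inj,
        Prod.ext_iff, ite_and, mul_ite, ite_mul, mul_one, one_mul, mul_zero, zero_mul]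
    rw [hneg, Matrix.one_kronecker_one]
    have hns : ((-1 : Matrix (Fin p × Fin 2) (Fin p × Fin 2) ℝ)).submatrix ⇑e.symm ⇑e.symm
        = -((1 : Matrix (Fin p × Fin 2) (Fin p × Fin 2) ℝ).submatrix ⇑e.symm ⇑e.symm) := rfl
    rw [hns, Matrix.submatrix_one_equiv e.symm]
  -- K commutes with the diagonal
  have hdiagkron : (Matrix.diagonal μ) ⊗ₖ (1 : Matrix (Fin 2) (Fin 2) ℝ)
      = Matrix.diagonal (fun x : Fin p × Fin 2 => μ x.1) := by
    have hfun : (fun mn : Fin p × Fin 2 => μ mn.1 * 1) = fun x : Fin p × Fin 2 => μ x.1 :=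
      funext fun x => mul_one _
    rw [← Matrix.diagonal_one, Matrix.diagonal_kronecker_diagonal, hfun]
  have hdg : Matrix.diagonal g
      = ((Matrix.diagonal μ) ⊗ₖ (1 : Matrix (Fin 2) (Fin 2) ℝ)).submatrix ⇑e.symm ⇑e.symm := by
    rw [hdiagkron, Matrix.submatrix_diagonal _ _ e.symm.injective]
    rfl
  have hKD : K * Matrix.diagonal g = Matrix.diagonal g * K := by
    rw [hdg, hKdef, Matrix.submatrix_mul_equiv, Matrix.submatrix_mul_equiv]
    simp only [← Matrix.mul_kronecker_mul, Matrix.one_mul, Matrix.mul_one]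
  -- assemble
  refine ⟨W * K * Wᵀ, ?_, ?_, ?_⟩
  · have ht : (W * K * Wᵀ)ᵀ = W * Kᵀ * Wᵀ := by
      simp [Matrix.transpose_mul, Matrix.mul_assoc]
    rw [ht]
    calc W * Kᵀ * Wᵀ * (W * K * Wᵀ)
        = W * (Kᵀ * ((Wᵀ * W) * (K * Wᵀ))) := by simp only [Matrix.mul_assoc]
      _ = 1 := by
          rw [hWtW, one_mul, ← Matrix.mul_assoc Kᵀ K Wᵀ, hKtK, one_mul, hWWt]
  · calc W * K * Wᵀ * (W * K * Wᵀ)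
        = W * (K * ((Wᵀ * W) * (K * Wᵀ))) := by simp only [Matrix.mul_assoc]
      _ = -1 := by
          rw [hWtW, one_mul, ← Matrix.mul_assoc K K Wᵀ, hKK, neg_one_mul,
            Matrix.mul_neg, hWWt]
  · rw [hCW]
    calc W * K * Wᵀ * (W * Matrix.diagonal g * Wᵀ)
        = W * ((K * Matrix.diagonal g) * Wᵀ) := by
          simp only [Matrix.mul_assoc]
          rw [← Matrix.mul_assoc Wᵀ W, hWtW, one_mul]
      _ = W * ((Matrix.diagonal g * K) * Wᵀ) := by rw [hKD]
      _ = W * Matrix.diagonal g * Wᵀ * (W * K * Wᵀ) := by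
          simp only [Matrix.mul_assoc]
          rw [← Matrix.mul_assoc Wᵀ W, hWtW, one_mul]
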